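/- Fix a real number r. For graphs G_a with Laplacians L_a of sizes n_a, define D̃_r(G_a, G_b) = inf over P with P^T P = I of (n_a n_b)^{−r} ||(n_a/n_b)^{−r} P L_a − (n_a/n_b)^{r} L_b P||_F (for n_a ≤ n_b). Then for n₁ ≤ n₂ ≤ n₃, D̃_r(G₁, G₃) ≤ D̃_r(G₁, G₂) + D̃_r(G₂, G₃). -/

import Mathlib

open Matrix

/-- Frobenius norm of a real matrix. -/
noncomputable def frob {a b : ℕ} (A : Matrix (Fin a) (Fin b) ℝ) : ℝ :=
  Real.sqrt (Matrix.trace (Aᵀ * A))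

/-- The time-scaled graph diffusion distance with α fixed at `(n_a/n_b)^r`. -/
noncomputable def tsgdd (r : ℝ) {a b : ℕ} (La : Matrix (Fin a) (Fin a) ℝ)
    (Lb : Matrix (Fin b) (Fin b) ℝ) : ℝ :=
  sInf {x : ℝ | ∃ P : Matrix (Fin b) (Fin a) ℝ, Pᵀ * P = 1 ∧
    x = ((a : ℝ) * b) ^ (-r) *
      frob ((((a : ℝ) / b) ^ (-r)) • (P * La) - (((a : ℝ) / b) ^ r) • (Lb * P))}

/-! ### Auxiliary lemmas about the Frobenius norm -/

/-- The matrix coerced to a Euclidean space vector. -/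
noncomputable def toE {a b : ℕ} (A : Matrix (Fin a) (Fin b) ℝ) :
    EuclideanSpace ℝ (Fin a × Fin b) := WithLp.toLp 2 (fun p => A p.1 p.2)

lemma frob_eq_norm {a b : ℕ} (A : Matrix (Fin a) (Fin b) ℝ) : frob A = ‖toE A‖ := by
  rw [EuclideanSpace.norm_eq, frob]
  congr 1
  simp only [Matrix.trace, Matrix.diag, Matrix.mul_apply, Matrix.transpose_apply,
    Fintype.sum_prod_type, toE, Real.norm_eq_abs, sq_abs, sq]
  rw [Finset.sum_comm]
  simp [abs_mul_abs_self]

lemma frob_nonneg {a b : ℕ} (A : Matrix (Fin a) (Fin b) ℝ) : 0 ≤ frob A :=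
  Real.sqrt_nonneg _

lemma frob_add_le {a b : ℕ} (A B : Matrix (Fin a) (Fin b) ℝ) :
    frob (A + B) ≤ frob A + frob B := by
  rw [frob_eq_norm, frob_eq_norm, frob_eq_norm]
  have : toE (A + B) = toE A + toE B := rfl
  rw [this]; exact norm_add_le _ _

lemma frob_smul {a b : ℕ} (c : ℝ) (A : Matrix (Fin a) (Fin b) ℝ) :
    frob (c • A) = |c| * frob A := by
  rw [frob_eq_norm, frob_eq_norm]
  have : toE (c • A) = c • toE A := rfl
  rw [this, norm_smul, Real.norm_eq_abs]

lemma trace_transpose_mul_nonneg {a b : ℕ} (A : Matrix (Fin a) (Fin b) ℝ) :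
    0 ≤ Matrix.trace (Aᵀ * A) := by
  simp only [Matrix.trace, Matrix.diag, Matrix.mul_apply, Matrix.transpose_apply]
  exact Finset.sum_nonneg fun j _ => Finset.sum_nonneg fun i _ => mul_self_nonneg _

lemma frob_mul_left {a b c : ℕ} (Q : Matrix (Fin c) (Fin b) ℝ) (hQ : Qᵀ * Q = 1)
    (E : Matrix (Fin b) (Fin a) ℝ) : frob (Q * E) = frob E := by
  unfold frob
  rw [transpose_mul, Matrix.mul_assoc, ← Matrix.mul_assoc Qᵀ, hQ, Matrix.one_mul]

lemma frob_mul_right {a b c : ℕ} (E : Matrix (Fin c) (Fin b) ℝ) (P : Matrix (Fin b) (Fin a) ℝ)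
    (hP : Pᵀ * P = 1) : frob (E * P) ≤ frob E := by
  unfold frob
  apply Real.sqrt_le_sqrt
  have key : Matrix.trace ((E * P)ᵀ * (E * P)) +
      Matrix.trace ((E - E * (P * Pᵀ))ᵀ * (E - E * (P * Pᵀ))) = Matrix.trace (Eᵀ * E) := by
    have ht0 : Matrix.trace (Pᵀ * (Eᵀ * (E * P))) = Matrix.trace (Eᵀ * (E * (P * Pᵀ))) := by
      rw [Matrix.trace_mul_comm]; simp [Matrix.mul_assoc]
    have ht3 : Matrix.trace (P * (Pᵀ * (Eᵀ * E))) = Matrix.trace (Eᵀ * (E * (P * Pᵀ))) := by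
      rw [Matrix.trace_mul_comm]; simp only [Matrix.mul_assoc]; exact ht0
    have ht4 : Matrix.trace (P * (Pᵀ * (Eᵀ * (E * (P * Pᵀ))))) =
        Matrix.trace (Eᵀ * (E * (P * Pᵀ))) := by
      rw [Matrix.trace_mul_comm]; simp only [Matrix.mul_assoc]
      rw [hP, Matrix.mul_one]; exact ht0
    simp only [transpose_sub, transpose_mul, transpose_transpose, Matrix.sub_mul,
      Matrix.mul_sub, Matrix.trace_sub, Matrix.mul_assoc]
    rw [ht0, ht3, ht4]
    ring
  linarith [trace_transpose_mul_nonneg (E - E * (P * Pᵀ))]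

lemma exists_isometry {a b : ℕ} (hab : a ≤ b) :
    ∃ P : Matrix (Fin b) (Fin a) ℝ, Pᵀ * P = 1 := by
  refine ⟨Matrix.of fun i j => if i = Fin.castLE hab j then 1 else 0, ?_⟩
  ext j k
  simp only [Matrix.mul_apply, Matrix.transpose_apply, Matrix.of_apply,
    ite_mul, one_mul, zero_mul, Matrix.one_apply]
  rw [Finset.sum_ite_eq' Finset.univ (Fin.castLE hab j)]
  simp [Fin.castLE_inj]

lemma rpow_div_mul {x y z : ℝ} (hx : 0 < x) (hy : 0 < y) (hz : 0 < z) (t : ℝ) :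
    (y / z) ^ t * (x / y) ^ t = (x / z) ^ t := by
  rw [← Real.mul_rpow (by positivity) (by positivity)]
  congr 1
  field_simp

theorem tsgdd_triangle (r : ℝ) {n₁ n₂ n₃ : ℕ}
    (h1 : 0 < n₁) (h12 : n₁ ≤ n₂) (h23 : n₂ ≤ n₃)
    (L₁ : Matrix (Fin n₁) (Fin n₁) ℝ) (L₂ : Matrix (Fin n₂) (Fin n₂) ℝ)
    (L₃ : Matrix (Fin n₃) (Fin n₃) ℝ)
    (h₁ : L₁.IsSymm) (h₂ : L₂.IsSymm) (h₃ : L₃.IsSymm) :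
    tsgdd r L₁ L₃ ≤ tsgdd r L₁ L₂ + tsgdd r L₂ L₃ := by
  have hn1 : (0:ℝ) < n₁ := by exact_mod_cast h1
  have hn2 : (0:ℝ) < n₂ := by exact_mod_cast h1.trans_le h12
  have hn3 : (0:ℝ) < n₃ := by exact_mod_cast (h1.trans_le h12).trans_le h23
  set S12 : Set ℝ := {x : ℝ | ∃ P : Matrix (Fin n₂) (Fin n₁) ℝ, Pᵀ * P = 1 ∧
    x = ((n₁ : ℝ) * n₂) ^ (-r) *
      frob ((((n₁ : ℝ) / n₂) ^ (-r)) • (P * L₁) - (((n₁ : ℝ) / n₂) ^ r) • (L₂ * P))} with hS12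
  set S23 : Set ℝ := {x : ℝ | ∃ Q : Matrix (Fin n₃) (Fin n₂) ℝ, Qᵀ * Q = 1 ∧
    x = ((n₂ : ℝ) * n₃) ^ (-r) *
      frob ((((n₂ : ℝ) / n₃) ^ (-r)) • (Q * L₂) - (((n₂ : ℝ) / n₃) ^ r) • (L₃ * Q))} with hS23
  set S13 : Set ℝ := {x : ℝ | ∃ R : Matrix (Fin n₃) (Fin n₁) ℝ, Rᵀ * R = 1 ∧
    x = ((n₁ : ℝ) * n₃) ^ (-r) *
      frob ((((n₁ : ℝ) / n₃) ^ (-r)) • (R * L₁) - (((n₁ : ℝ) / n₃) ^ r) • (L₃ * R))} with hS13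
  have e12 : tsgdd r L₁ L₂ = sInf S12 := rfl
  have e23 : tsgdd r L₂ L₃ = sInf S23 := rfl
  have e13 : tsgdd r L₁ L₃ = sInf S13 := rfl
  rw [e12, e23, e13]
  -- nonemptiness
  obtain ⟨P₀, hP₀⟩ := exists_isometry h12
  obtain ⟨Q₀, hQ₀⟩ := exists_isometry h23
  obtain ⟨R₀, hR₀⟩ := exists_isometry (h12.trans h23)
  have ne12 : S12.Nonempty := ⟨_, P₀, hP₀, rfl⟩
  have ne23 : S23.Nonempty := ⟨_, Q₀, hQ₀, rfl⟩
  have ne13 : S13.Nonempty := ⟨_, R₀, hR₀, rfl⟩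
  have bdd13 : BddBelow S13 := by
    refine ⟨0, fun x hx => ?_⟩
    obtain ⟨R, hR, rfl⟩ := hx
    exact mul_nonneg (Real.rpow_nonneg (by positivity) _) (frob_nonneg _)
  -- main combination step
  have combine : ∀ x ∈ S12, ∀ y ∈ S23, sInf S13 ≤ x + y := by
    rintro x ⟨P, hP, rfl⟩ y ⟨Q, hQ, rfl⟩
    have hQP : (Q * P)ᵀ * (Q * P) = 1 := by
      rw [transpose_mul, Matrix.mul_assoc, ← Matrix.mul_assoc Qᵀ, hQ, Matrix.one_mul, hP]
    set E₁ := (((n₁:ℝ)/n₂) ^ (-r)) • (P * L₁) - (((n₁:ℝ)/n₂) ^ r) • (L₂ * P) with hE₁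
    set E₂ := (((n₂:ℝ)/n₃) ^ (-r)) • (Q * L₂) - (((n₂:ℝ)/n₃) ^ r) • (L₃ * Q) with hE₂
    have s1 : ((n₁:ℝ)/n₃) ^ (-r) = ((n₂:ℝ)/n₃) ^ (-r) * ((n₁:ℝ)/n₂) ^ (-r) :=
      (rpow_div_mul hn1 hn2 hn3 (-r)).symm
    have s2 : ((n₁:ℝ)/n₃) ^ r = ((n₁:ℝ)/n₂) ^ r * ((n₂:ℝ)/n₃) ^ r := by
      rw [mul_comm]; exact (rpow_div_mul hn1 hn2 hn3 r).symm
    have key : (((n₁:ℝ)/n₃) ^ (-r)) • ((Q * P) * L₁) - (((n₁:ℝ)/n₃) ^ r) • (L₃ * (Q * P)) =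
        (((n₂:ℝ)/n₃) ^ (-r)) • (Q * E₁) + (((n₁:ℝ)/n₂) ^ r) • (E₂ * P) := by
      rw [hE₁, hE₂, s1, s2]
      simp only [Matrix.mul_sub, Matrix.sub_mul, smul_sub, Matrix.mul_smul, Matrix.smul_mul,
        smul_smul, Matrix.mul_assoc]
      module
    have c23m_pos : (0:ℝ) < ((n₂:ℝ)/n₃) ^ (-r) := Real.rpow_pos_of_pos (by positivity) _
    have c12p_pos : (0:ℝ) < ((n₁:ℝ)/n₂) ^ r := Real.rpow_pos_of_pos (by positivity) _
    have hfr : frob ((((n₁:ℝ)/n₃) ^ (-r)) • ((Q * P) * L₁) -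
          (((n₁:ℝ)/n₃) ^ r) • (L₃ * (Q * P))) ≤
        ((n₂:ℝ)/n₃) ^ (-r) * frob E₁ + ((n₁:ℝ)/n₂) ^ r * frob E₂ := by
      rw [key]
      calc frob ((((n₂:ℝ)/n₃) ^ (-r)) • (Q * E₁) + (((n₁:ℝ)/n₂) ^ r) • (E₂ * P))
          ≤ frob ((((n₂:ℝ)/n₃) ^ (-r)) • (Q * E₁)) + frob ((((n₁:ℝ)/n₂) ^ r) • (E₂ * P)) :=
            frob_add_le _ _
        _ = ((n₂:ℝ)/n₃) ^ (-r) * frob (Q * E₁) + ((n₁:ℝ)/n₂) ^ r * frob (E₂ * P) := by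
            rw [frob_smul, frob_smul, abs_of_pos c23m_pos, abs_of_pos c12p_pos]
        _ ≤ ((n₂:ℝ)/n₃) ^ (-r) * frob E₁ + ((n₁:ℝ)/n₂) ^ r * frob E₂ := by
            rw [frob_mul_left Q hQ E₁]
            gcongr
            exact frob_mul_right E₂ P hP
    have memz : ((n₁:ℝ) * n₃) ^ (-r) *
        frob ((((n₁:ℝ)/n₃) ^ (-r)) • ((Q * P) * L₁) - (((n₁:ℝ)/n₃) ^ r) • (L₃ * (Q * P)))
        ∈ S13 := ⟨Q * P, hQP, rfl⟩
    refine (csInf_le bdd13 memz).trans ?_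
    have k13_pos : (0:ℝ) < ((n₁:ℝ) * n₃) ^ (-r) := Real.rpow_pos_of_pos (by positivity) _
    have s3 : ((n₁:ℝ) * n₃) ^ (-r) * (((n₂:ℝ)/n₃) ^ (-r)) = ((n₁:ℝ) * n₂) ^ (-r) := by
      rw [← Real.mul_rpow (by positivity) (by positivity)]
      congr 1
      field_simp
    have s4 : ((n₁:ℝ) * n₃) ^ (-r) * (((n₁:ℝ)/n₂) ^ r) = ((n₂:ℝ) * n₃) ^ (-r) := by
      have hflip : ((n₁:ℝ)/n₂) ^ r = ((n₂:ℝ)/n₁) ^ (-r) := by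
        rw [Real.rpow_neg (by positivity), ← Real.inv_rpow (by positivity), inv_div]
      rw [hflip, ← Real.mul_rpow (by positivity) (by positivity)]
      congr 1
      field_simp
    calc ((n₁:ℝ) * n₃) ^ (-r) *
        frob ((((n₁:ℝ)/n₃) ^ (-r)) • ((Q * P) * L₁) - (((n₁:ℝ)/n₃) ^ r) • (L₃ * (Q * P)))
        ≤ ((n₁:ℝ) * n₃) ^ (-r) *
          (((n₂:ℝ)/n₃) ^ (-r) * frob E₁ + ((n₁:ℝ)/n₂) ^ r * frob E₂) := by
          exact mul_le_mul_of_nonneg_left hfr k13_pos.le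
      _ = ((n₁:ℝ) * n₂) ^ (-r) * frob E₁ + ((n₂:ℝ) * n₃) ^ (-r) * frob E₂ := by
          rw [mul_add, ← mul_assoc, ← mul_assoc, s3, s4]
  -- conclude
  have step2 : ∀ x ∈ S12, sInf S13 - x ≤ sInf S23 := fun x hx =>
    le_csInf ne23 fun y hy => by linarith [combine x hx y hy]
  have step3 : sInf S13 - sInf S23 ≤ sInf S12 :=
    le_csInf ne12 fun x hx => by linarith [step2 x hx]
  linarith
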